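/- arXiv:2008.01467 — 3 statements merged into one kernel-verified Lean document; each statement's English description precedes it below -/
import Mathlib

section
/- Let Q ⊂ (0,∞) × ℝ be open, Ã ∈ C²(Q̄), φ̃ ∈ C²(Q̄), B̃ : Q̄ → ℝ³ with B̃₁ = r⁻¹∂_z Ã, B̃₃ = -r⁻¹∂_r Ã (B̃₂ arbitrary continuous), and constants q ≠ 0, m > 0, c > 0. Then I(r,z,w) = Ã(r,z) - (cm/q) r w₂ is a first integral of the system ṙ = w₁, ż = w₃, ẇ = -(q/m)(∂_r φ̃, 0, ∂_z φ̃) + (q/(cm)) w × B̃(r,z) + (w₂/r)(w₂, -w₁, 0). -/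
/-- `I(r,z,w) = Ã(r,z) - (cm/q) r w₂` is a first integral of the reduced characteristic
system in the toroidally symmetric case. -/
theorem stmt3 (Q : Set (ℝ × ℝ)) (hQ : IsOpen Q) (hQpos : ∀ p ∈ Q, 0 < p.1)
    (A φ : ℝ × ℝ → ℝ) (A' φ' : ℝ × ℝ → (ℝ × ℝ) →L[ℝ] ℝ)
    (hA : ∀ p ∈ Q, HasFDerivAt A (A' p) p)
    (hφ : ∀ p ∈ Q, HasFDerivAt φ (φ' p) p)
    (B₂ : ℝ × ℝ → ℝ) (hB₂ : Continuous B₂)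
    (B : ℝ × ℝ → (Fin 3 → ℝ))
    (hB : ∀ p : ℝ × ℝ, B p = ![p.1⁻¹ * A' p (0, 1), B₂ p, -(p.1⁻¹ * A' p (1, 0))])
    (q m c : ℝ) (hq : q ≠ 0) (hm : 0 < m) (hc : 0 < c)
    (r z : ℝ → ℝ) (w : ℝ → (Fin 3 → ℝ)) (t : ℝ)
    (ht : (r t, z t) ∈ Q)
    (hr : HasDerivAt r (w t 0) t) (hz : HasDerivAt z (w t 2) t)
    (hw : HasDerivAt w
      (![-(q / m) * φ' (r t, z t) (1, 0)
          + q / (c * m) * (w t 1 * B (r t, z t) 2 - w t 2 * B (r t, z t) 1)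
          + (w t 1 / r t) * w t 1,
         q / (c * m) * (w t 2 * B (r t, z t) 0 - w t 0 * B (r t, z t) 2)
          + (w t 1 / r t) * (-(w t 0)),
         -(q / m) * φ' (r t, z t) (0, 1)
          + q / (c * m) * (w t 0 * B (r t, z t) 1 - w t 1 * B (r t, z t) 0)]) t) :
    HasDerivAt (fun s => A (r s, z s) - (c * m / q) * (r s * w s 1)) 0 t := by
  have hrt : 0 < r t := hQpos _ ht
  have hrz : HasDerivAt (fun s => (r s, z s)) (w t 0, w t 2) t := hr.prodMk hz
  have hAc := (hA _ ht).comp_hasDerivAt t hrz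
  have hw1 : HasDerivAt (fun s => w s 1)
      (q / (c * m) * (w t 2 * B (r t, z t) 0 - w t 0 * B (r t, z t) 2)
        + (w t 1 / r t) * (-(w t 0))) t := by
    have := (hasDerivAt_pi.mp hw) 1
    simpa using this
  have hprod := hr.mul hw1
  have hmain := hAc.sub ((hprod.const_mul (c * m / q)))
  refine hmain.congr_deriv ?_
  have hdecomp : ((w t 0, w t 2) : ℝ × ℝ) = w t 0 • ((1:ℝ), (0:ℝ)) + w t 2 • ((0:ℝ), (1:ℝ)) := by
    simp [Prod.ext_iff]
  rw [hdecomp, map_add, map_smul, map_smul]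
  rw [hB]
  simp only [Matrix.cons_val_zero, Matrix.cons_val_one, Matrix.head_cons,
    Matrix.cons_val_two, Matrix.tail_cons, smul_eq_mul]
  field_simp
  ring
end

section
/- Let a ∈ C¹([-l,l]) and φ ∈ C²(Ω̄) with Ω = B_{r₀}(0) × (-l,l) ⊂ ℝ³ such that φ(x) depends only on (|x'|, x₃) where x' = (x₁,x₂). Let q ≠ 0, m > 0, c > 0. Then I(x,v) = (a(x₃)/2)(x₁² + x₂²) + (cm/q)(x₁v₂ - x₂v₁) is a first integral of the system ẋ = v, v̇ = -(q/m)∇φ(x) + (q/(cm))(a(x₃)v₂ + ½a'(x₃)x₂v₃, -a(x₃)v₁ - ½a'(x₃)x₁v₃, ½a'(x₃)(x₁v₂ - x₂v₁)). -/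
/-- For the mirror-trap magnetic field `B(x) = (-½a'(x₃)x₁, -½a'(x₃)x₂, a(x₃))` in a finite
cylinder and an axially symmetric potential `φ`, the function
`I(x,v) = (a(x₃)/2)(x₁²+x₂²) + (cm/q)(x₁v₂ - x₂v₁)` is a first integral. -/
theorem stmt5 (r₀ l : ℝ) (hr₀ : 0 < r₀) (hl : 0 < l)
    (a a' : ℝ → ℝ) (ha : ∀ s ∈ Set.Icc (-l) l, HasDerivAt a (a' s) s)
    (φ : (Fin 3 → ℝ) → ℝ)
    (hsym : ∀ x y : Fin 3 → ℝ,
      x 0 ^ 2 + x 1 ^ 2 ≤ r₀ ^ 2 → y 0 ^ 2 + y 1 ^ 2 ≤ r₀ ^ 2 →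
      x 2 ∈ Set.Icc (-l) l → y 2 ∈ Set.Icc (-l) l →
      x 0 ^ 2 + x 1 ^ 2 = y 0 ^ 2 + y 1 ^ 2 → x 2 = y 2 → φ x = φ y)
    (φ' : (Fin 3 → ℝ) → (Fin 3 → ℝ) →L[ℝ] ℝ)
    (hφ : ∀ y : Fin 3 → ℝ, y 0 ^ 2 + y 1 ^ 2 < r₀ ^ 2 → y 2 ∈ Set.Ioo (-l) l →
      HasFDerivAt φ (φ' y) y)
    (q m c : ℝ) (hq : q ≠ 0) (hm : 0 < m) (hc : 0 < c)
    (x v : ℝ → (Fin 3 → ℝ)) (t : ℝ)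
    (hxQ : x t 0 ^ 2 + x t 1 ^ 2 < r₀ ^ 2) (hxz : x t 2 ∈ Set.Ioo (-l) l)
    (hx : HasDerivAt x (v t) t)
    (hv : HasDerivAt v
      (![-(q / m) * φ' (x t) (Pi.single 0 1)
          + q / (c * m) * (a (x t 2) * v t 1 + (1/2) * a' (x t 2) * x t 1 * v t 2),
         -(q / m) * φ' (x t) (Pi.single 1 1)
          + q / (c * m) * (-(a (x t 2) * v t 0) - (1/2) * a' (x t 2) * x t 0 * v t 2),
         -(q / m) * φ' (x t) (Pi.single 2 1)
          + q / (c * m) * ((1/2) * a' (x t 2) * (x t 0 * v t 1 - x t 1 * v t 0))]) t) :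
    HasDerivAt (fun s => a (x s 2) / 2 * (x s 0 ^ 2 + x s 1 ^ 2)
      + c * m / q * (x s 0 * v s 1 - x s 1 * v s 0)) 0 t := by
  have hx0 : HasDerivAt (fun s => x s 0) (v t 0) t := (hasDerivAt_pi.mp hx) 0
  have hx1 : HasDerivAt (fun s => x s 1) (v t 1) t := (hasDerivAt_pi.mp hx) 1
  have hx2 : HasDerivAt (fun s => x s 2) (v t 2) t := (hasDerivAt_pi.mp hx) 2
  set P := φ' (x t) (Pi.single 0 1) with hP
  set Q := φ' (x t) (Pi.single 1 1) with hQ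
  have hv0 : HasDerivAt (fun s => v s 0)
      (-(q / m) * P + q / (c * m) * (a (x t 2) * v t 1 + (1/2) * a' (x t 2) * x t 1 * v t 2)) t := by
    simpa using (hasDerivAt_pi.mp hv) 0
  have hv1 : HasDerivAt (fun s => v s 1)
      (-(q / m) * Q + q / (c * m) * (-(a (x t 2) * v t 0) - (1/2) * a' (x t 2) * x t 0 * v t 2)) t := by
    simpa using (hasDerivAt_pi.mp hv) 1
  have ha2 : HasDerivAt (fun s => a (x s 2)) (a' (x t 2) * v t 2) t :=
    (ha (x t 2) (Set.mem_Icc_of_Ioo hxz)).comp t hx2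
  -- rotational invariance gives the angular derivative zero
  have hrot : x t 0 * Q - x t 1 * P = 0 := by
    set γ : ℝ → (Fin 3 → ℝ) := fun θ =>
      ![x t 0 * Real.cos θ - x t 1 * Real.sin θ,
        x t 0 * Real.sin θ + x t 1 * Real.cos θ, x t 2] with hγ
    have hγ0 : γ 0 = x t := by
      funext i; fin_cases i <;> simp [hγ]
    have hγd : HasDerivAt γ ![-(x t 1), x t 0, 0] 0 := by
      apply hasDerivAt_pi.mpr
      intro i
      fin_cases i
      · have h := ((Real.hasDerivAt_cos 0).const_mul (x t 0)).sub
          ((Real.hasDerivAt_sin 0).const_mul (x t 1))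
        simp at h; exact h
      · have h := ((Real.hasDerivAt_sin 0).const_mul (x t 0)).add
          ((Real.hasDerivAt_cos 0).const_mul (x t 1))
        simp at h; exact h
      · exact hasDerivAt_const (0:ℝ) (x t 2)
    have hcomp : HasDerivAt (fun θ => φ (γ θ)) (φ' (x t) ![-(x t 1), x t 0, 0]) 0 := by
      have h1 : HasFDerivAt φ (φ' (x t)) (γ 0) := by rw [hγ0]; exact hφ (x t) hxQ hxz
      exact h1.comp_hasDerivAt 0 hγd
    have hconst : (fun θ => φ (γ θ)) = fun _ => φ (x t) := by
      funext θ
      have hsq : γ θ 0 ^ 2 + γ θ 1 ^ 2 = x t 0 ^ 2 + x t 1 ^ 2 := by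
        have h := Real.sin_sq_add_cos_sq θ
        simp only [hγ, Matrix.cons_val_zero, Matrix.cons_val_one, Matrix.head_cons]
        nlinarith [h]
      exact hsym (γ θ) (x t) (by rw [hsq]; exact le_of_lt hxQ) (le_of_lt hxQ)
        (by simpa [hγ] using Set.mem_Icc_of_Ioo hxz) (Set.mem_Icc_of_Ioo hxz)
        hsq (by simp [hγ])
    rw [hconst] at hcomp
    have hz : φ' (x t) ![-(x t 1), x t 0, 0] = 0 :=
      hcomp.unique (hasDerivAt_const 0 (φ (x t)))
    have hvec : (![-(x t 1), x t 0, 0] : Fin 3 → ℝ)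
        = x t 0 • (Pi.single 1 1 : Fin 3 → ℝ) + (-(x t 1)) • (Pi.single 0 1 : Fin 3 → ℝ) := by
      funext i; fin_cases i <;> simp
    rw [hvec] at hz
    simp only [map_add, map_smul, smul_eq_mul, ← hP, ← hQ] at hz
    linarith [hz]
  have H := ((ha2.div_const 2).mul ((hx0.pow 2).add (hx1.pow 2))).add
    (((hx0.mul hv1).sub (hx1.mul hv0)).const_mul (c * m / q))
  convert H using 1
  · rfl
  · rfl
  · rfl
  have hm' : m ≠ 0 := ne_of_gt hm
  have hc' : c ≠ 0 := ne_of_gt hc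
  simp only [Pi.add_apply, Pi.pow_apply]
  field_simp
  ring_nf
  linear_combination (q * c * 2) * hrot
end

section
/- Let Q ⊂ ℝⁿ bounded, τ ∈ (0,1], α ∈ (0, τ²), and ρ̃ : Q̄ × ℝ → ℝ bounded and globally τ-Hölder continuous. Then the composition operator C^{0,τ}(Q̄) → C^{0,α}(Q̄), φ ↦ ρ̃(·, φ(·)), is continuous with respect to the Hölder norms. -/
/-- Supremum norm of `f` over the set `s`. -/
noncomputable def supNorm {n : ℕ} (f : EuclideanSpace ℝ (Fin n) → ℝ)
    (s : Set (EuclideanSpace ℝ (Fin n))) : ℝ :=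
  sSup ((fun x => |f x|) '' s)

/-- Hölder seminorm `[f]_{C^{0,β}}` of `f` over the set `s`. -/
noncomputable def holderSemi {n : ℕ} (β : ℝ) (f : EuclideanSpace ℝ (Fin n) → ℝ)
    (s : Set (EuclideanSpace ℝ (Fin n))) : ℝ :=
  sSup {c | ∃ x ∈ s, ∃ y ∈ s, x ≠ y ∧ c = |f x - f y| / ‖x - y‖ ^ β}

/-- Hölder norm `‖f‖_{C^{0,β}} = ‖f‖_{C⁰} + [f]_{C^{0,β}}`. -/
noncomputable def holderNorm {n : ℕ} (β : ℝ) (f : EuclideanSpace ℝ (Fin n) → ℝ)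
    (s : Set (EuclideanSpace ℝ (Fin n))) : ℝ :=
  supNorm f s + holderSemi β f s

/-- `f` is `τ`-Hölder continuous on `s`. -/
def IsHolder {n : ℕ} (τ : ℝ) (f : EuclideanSpace ℝ (Fin n) → ℝ)
    (s : Set (EuclideanSpace ℝ (Fin n))) : Prop :=
  ∃ C : ℝ, ∀ x ∈ s, ∀ y ∈ s, |f x - f y| ≤ C * ‖x - y‖ ^ τ

lemma my_supNorm_nonneg {n : ℕ} (f : EuclideanSpace ℝ (Fin n) → ℝ)
    (s : Set (EuclideanSpace ℝ (Fin n))) : 0 ≤ supNorm f s := by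
  apply Real.sSup_nonneg
  rintro _ ⟨x, _, rfl⟩
  exact abs_nonneg _

lemma my_holderSemi_nonneg {n : ℕ} (β : ℝ) (f : EuclideanSpace ℝ (Fin n) → ℝ)
    (s : Set (EuclideanSpace ℝ (Fin n))) : 0 ≤ holderSemi β f s := by
  apply Real.sSup_nonneg
  rintro c ⟨x, _, y, _, _, rfl⟩
  have h1 : (0:ℝ) ≤ ‖x - y‖ ^ β := Real.rpow_nonneg (norm_nonneg _) _
  positivity

lemma my_abs_sub {a b : ℝ} : |a - b| ≤ |a| + |b| := by
  rw [sub_eq_add_neg]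
  simpa using abs_add_le a (-b)

set_option maxHeartbeats 1000000 in
/-- Continuity of the composition operator `C^{0,τ}(Q̄) → C^{0,α}(Q̄)`,
`φ ↦ ρ̃(·, φ(·))`, for `α ∈ (0, τ²)` and `ρ̃` bounded and globally `τ`-Hölder. -/
theorem stmt12 (n : ℕ) (Q : Set (EuclideanSpace ℝ (Fin n)))
    (hQbdd : Bornology.IsBounded Q)
    (τ α : ℝ) (hτ0 : 0 < τ) (hτ1 : τ ≤ 1) (hα : 0 < α) (hατ : α < τ ^ 2)
    (ρ : EuclideanSpace ℝ (Fin n) → ℝ → ℝ) (Cb ctil : ℝ)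
    (hbd : ∀ x u, |ρ x u| ≤ Cb)
    (hhold : ∀ x ∈ closure Q, ∀ y ∈ closure Q, ∀ u w : ℝ,
      |ρ x u - ρ y w| ≤ ctil * Real.sqrt (‖x - y‖ ^ 2 + (u - w) ^ 2) ^ τ) :
    ∀ φ₁ : EuclideanSpace ℝ (Fin n) → ℝ, IsHolder τ φ₁ (closure Q) →
    ∀ ε > (0:ℝ), ∃ δ > (0:ℝ), ∀ φ₂ : EuclideanSpace ℝ (Fin n) → ℝ,
      IsHolder τ φ₂ (closure Q) →
      holderNorm τ (fun x => φ₁ x - φ₂ x) (closure Q) ≤ δ →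
      holderNorm α (fun x => ρ x (φ₁ x) - ρ x (φ₂ x)) (closure Q) ≤ ε := by
  intro φ₁ hφ₁ ε hε
  set s : Set (EuclideanSpace ℝ (Fin n)) := closure Q with hsdef
  by_cases hne : s.Nonempty
  swap
  · refine ⟨1, one_pos, fun φ₂ _ _ => ?_⟩
    rw [Set.not_nonempty_iff_eq_empty] at hne
    have h1 : supNorm (fun x => ρ x (φ₁ x) - ρ x (φ₂ x)) s = 0 := by
      simp [supNorm, hne, Real.sSup_empty]
    have h2 : holderSemi α (fun x => ρ x (φ₁ x) - ρ x (φ₂ x)) s = 0 := by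
      have he : {c | ∃ x ∈ s, ∃ y ∈ s, x ≠ y ∧
          c = |(ρ x (φ₁ x) - ρ x (φ₂ x)) - (ρ y (φ₁ y) - ρ y (φ₂ y))| / ‖x - y‖ ^ α}
          = (∅ : Set ℝ) := by
        simp [hne]
      simp only [holderSemi]
      rw [he, Real.sSup_empty]
    rw [holderNorm, h1, h2]; linarith
  obtain ⟨x₀, hx₀⟩ := hne
  -- ctil is nonnegative
  have hctil : 0 ≤ ctil := by
    have h := hhold x₀ hx₀ x₀ hx₀ 0 1
    have e : Real.sqrt (‖x₀ - x₀‖ ^ 2 + ((0:ℝ) - 1) ^ 2) ^ τ = 1 := by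
      simp [sub_self]
    rw [e, mul_one] at h
    exact le_trans (abs_nonneg _) h
  -- diameter bound
  obtain ⟨D₀, hD₀⟩ := Metric.isBounded_iff.mp hQbdd.closure
  set D := max D₀ 1 with hDdef
  have hD1 : (1:ℝ) ≤ D := le_max_right _ _
  have hD0 : (0:ℝ) ≤ D := by linarith
  have hDdist : ∀ x ∈ s, ∀ y ∈ s, ‖x - y‖ ≤ D := by
    intro x hx y hy
    rw [← dist_eq_norm]
    exact le_trans (hD₀ hx hy) (le_max_left _ _)
  -- Hölder constant of φ₁
  obtain ⟨C₁', hC₁'⟩ := hφ₁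
  set C₁ := max C₁' 0 with hC1def
  have hC₁0 : (0:ℝ) ≤ C₁ := le_max_right _ _
  have hC₁ : ∀ x ∈ s, ∀ y ∈ s, |φ₁ x - φ₁ y| ≤ C₁ * ‖x - y‖ ^ τ := by
    intro x hx y hy
    exact le_trans (hC₁' x hx y hy)
      (mul_le_mul_of_nonneg_right (le_max_left _ _) (Real.rpow_nonneg (norm_nonneg _) _))
  set K := C₁ + 1 with hKdef
  have hK0 : (0:ℝ) ≤ K := by linarith
  set E := D + K with hEdef
  have hE0 : (0:ℝ) ≤ E := by linarith
  set A := 2 * ctil * E ^ τ with hAdef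
  have hA0 : (0:ℝ) ≤ A := by
    have : (0:ℝ) ≤ E ^ τ := Real.rpow_nonneg hE0 _
    nlinarith
  have hττ : α < τ * τ := by have := hατ; rwa [pow_two] at this
  set p := τ * τ - α with hpdef
  have hp : 0 < p := by simp only [hpdef]; linarith
  -- choose r₀
  have hεA : 0 < ε / (4 * (A + 1)) := by positivity
  set r₀ := min 1 ((ε / (4 * (A + 1))) ^ (1 / p)) with hr₀def
  have hr₀pos : 0 < r₀ := lt_min one_pos (Real.rpow_pos_of_pos hεA _)
  have hr₀1 : r₀ ≤ 1 := min_le_left _ _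
  have hr₀p : r₀ ^ p ≤ ε / (4 * (A + 1)) := by
    calc r₀ ^ p ≤ ((ε / (4 * (A + 1))) ^ (1 / p)) ^ p :=
          Real.rpow_le_rpow hr₀pos.le (min_le_right _ _) hp.le
      _ = ε / (4 * (A + 1)) := by
          rw [← Real.rpow_mul hεA.le, one_div, inv_mul_cancel₀ hp.ne', Real.rpow_one]
  have hArp : A * r₀ ^ p ≤ ε / 4 := by
    have h1 : A * r₀ ^ p ≤ (A + 1) * (ε / (4 * (A + 1))) := by
      apply mul_le_mul (by linarith) hr₀p (Real.rpow_nonneg hr₀pos.le _) (by linarith)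
    have h2 : (A + 1) * (ε / (4 * (A + 1))) = ε / 4 := by
      field_simp
    linarith
  -- choose δ
  have hr₀α : 0 < r₀ ^ α := Real.rpow_pos_of_pos hr₀pos _
  set m := min (ε / 2) (ε / 4 * r₀ ^ α) with hmdef
  have hm0 : 0 < m := lt_min (by linarith) (by positivity)
  have hmc : 0 < m / (ctil + 1) := by positivity
  set δ := min 1 ((m / (ctil + 1)) ^ (1 / τ)) with hδdef
  have hδ0 : 0 < δ := lt_min one_pos (Real.rpow_pos_of_pos hmc _)
  have hδ1 : δ ≤ 1 := min_le_left _ _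
  have hδτ : ctil * δ ^ τ ≤ m := by
    have h1 : δ ^ τ ≤ m / (ctil + 1) := by
      calc δ ^ τ ≤ ((m / (ctil + 1)) ^ (1 / τ)) ^ τ :=
            Real.rpow_le_rpow hδ0.le (min_le_right _ _) hτ0.le
        _ = m / (ctil + 1) := by
            rw [← Real.rpow_mul hmc.le, one_div, inv_mul_cancel₀ hτ0.ne', Real.rpow_one]
    have h2 : ctil * δ ^ τ ≤ (ctil + 1) * (m / (ctil + 1)) := by
      apply mul_le_mul (by linarith) h1 (Real.rpow_nonneg hδ0.le _) (by linarith)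
    have h3 : (ctil + 1) * (m / (ctil + 1)) = m := by field_simp
    linarith
  refine ⟨δ, hδ0, fun φ₂ hφ₂ hnorm => ?_⟩
  obtain ⟨C₂', hC₂'⟩ := hφ₂
  set Cf := max (|C₁'| + |C₂'|) 0 with hCfdef
  have hCf0 : (0:ℝ) ≤ Cf := le_max_right _ _
  -- the difference f = φ₁ - φ₂ is Hölder with constant Cf
  have hfH : ∀ x ∈ s, ∀ y ∈ s, |(φ₁ x - φ₂ x) - (φ₁ y - φ₂ y)| ≤ Cf * ‖x - y‖ ^ τ := by
    intro x hx y hy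
    have e : (φ₁ x - φ₂ x) - (φ₁ y - φ₂ y) = (φ₁ x - φ₁ y) - (φ₂ x - φ₂ y) := by ring
    rw [e]
    have hrτ : (0:ℝ) ≤ ‖x - y‖ ^ τ := Real.rpow_nonneg (norm_nonneg _) _
    calc |(φ₁ x - φ₁ y) - (φ₂ x - φ₂ y)| ≤ |φ₁ x - φ₁ y| + |φ₂ x - φ₂ y| := my_abs_sub
      _ ≤ C₁' * ‖x - y‖ ^ τ + C₂' * ‖x - y‖ ^ τ := add_le_add (hC₁' x hx y hy) (hC₂' x hx y hy)
      _ ≤ Cf * ‖x - y‖ ^ τ := by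
          have h1 : C₁' ≤ |C₁'| := le_abs_self _
          have h2 : C₂' ≤ |C₂'| := le_abs_self _
          have h3 : |C₁'| + |C₂'| ≤ Cf := le_max_left _ _
          nlinarith
  -- pointwise bound on f from the norm bound
  have hsemi_nonneg := my_holderSemi_nonneg τ (fun x => φ₁ x - φ₂ x) s
  have hsup_nonneg := my_supNorm_nonneg (fun x => φ₁ x - φ₂ x) s
  have hfsup : ∀ x ∈ s, |φ₁ x - φ₂ x| ≤ δ := by
    intro x hx
    have hbdd : BddAbove ((fun x => |(fun x => φ₁ x - φ₂ x) x|) '' s) := by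
      refine ⟨|φ₁ x₀ - φ₂ x₀| + Cf * D ^ τ, ?_⟩
      rintro _ ⟨z, hz, rfl⟩
      have h1 : |(φ₁ z - φ₂ z)| ≤ |(φ₁ z - φ₂ z) - (φ₁ x₀ - φ₂ x₀)| + |φ₁ x₀ - φ₂ x₀| := by
        have := abs_sub_abs_le_abs_sub (φ₁ z - φ₂ z) (φ₁ x₀ - φ₂ x₀)
        have := abs_nonneg (φ₁ x₀ - φ₂ x₀)
        linarith [abs_abs (φ₁ x₀ - φ₂ x₀)]
      have h2 : ‖z - x₀‖ ^ τ ≤ D ^ τ :=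
        Real.rpow_le_rpow (norm_nonneg _) (hDdist z hz x₀ hx₀) hτ0.le
      have h3 := hfH z hz x₀ hx₀
      have h4 : Cf * ‖z - x₀‖ ^ τ ≤ Cf * D ^ τ := mul_le_mul_of_nonneg_left h2 hCf0
      simp only []
      linarith
    have h5 : |φ₁ x - φ₂ x| ≤ supNorm (fun x => φ₁ x - φ₂ x) s :=
      le_csSup hbdd ⟨x, hx, rfl⟩
    have h6 : supNorm (fun x => φ₁ x - φ₂ x) s ≤ δ := by
      have := hnorm; rw [holderNorm] at this; linarith
    linarith
  have hfsemi : ∀ x ∈ s, ∀ y ∈ s, |(φ₁ x - φ₂ x) - (φ₁ y - φ₂ y)| ≤ δ * ‖x - y‖ ^ τ := by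
    intro x hx y hy
    rcases eq_or_ne x y with rfl | hxy
    · simp [Real.zero_rpow hτ0.ne', Real.rpow_nonneg, mul_nonneg hδ0.le]
    · have hr : 0 < ‖x - y‖ := by rwa [norm_sub_pos_iff]
      have hrτ : 0 < ‖x - y‖ ^ τ := Real.rpow_pos_of_pos hr _
      have hbdd : BddAbove {c | ∃ x ∈ s, ∃ y ∈ s, x ≠ y ∧
          c = |(fun x => φ₁ x - φ₂ x) x - (fun x => φ₁ x - φ₂ x) y| / ‖x - y‖ ^ τ} := by
        refine ⟨Cf, ?_⟩
        rintro c ⟨a, ha, b, hb, hab, rfl⟩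
        have hrab : 0 < ‖a - b‖ := by rwa [norm_sub_pos_iff]
        have hrabτ : 0 < ‖a - b‖ ^ τ := Real.rpow_pos_of_pos hrab _
        rw [div_le_iff₀ hrabτ]
        exact hfH a ha b hb
      have h5 : |(φ₁ x - φ₂ x) - (φ₁ y - φ₂ y)| / ‖x - y‖ ^ τ ≤
          holderSemi τ (fun x => φ₁ x - φ₂ x) s :=
        le_csSup hbdd ⟨x, hx, y, hy, hxy, rfl⟩
      have h6 : holderSemi τ (fun x => φ₁ x - φ₂ x) s ≤ δ := by
        have := hnorm; rw [holderNorm] at this; linarith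
      rw [div_le_iff₀ hrτ] at h5
      calc |(φ₁ x - φ₂ x) - (φ₁ y - φ₂ y)| ≤
            holderSemi τ (fun x => φ₁ x - φ₂ x) s * ‖x - y‖ ^ τ := h5
        _ ≤ δ * ‖x - y‖ ^ τ := mul_le_mul_of_nonneg_right h6 hrτ.le
  -- φ₂ is Hölder with constant K
  have hC₂ : ∀ x ∈ s, ∀ y ∈ s, |φ₂ x - φ₂ y| ≤ K * ‖x - y‖ ^ τ := by
    intro x hx y hy
    have hrτ : (0:ℝ) ≤ ‖x - y‖ ^ τ := Real.rpow_nonneg (norm_nonneg _) _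
    have e : φ₂ x - φ₂ y = (φ₁ x - φ₁ y) - ((φ₁ x - φ₂ x) - (φ₁ y - φ₂ y)) := by ring
    calc |φ₂ x - φ₂ y| ≤ |φ₁ x - φ₁ y| + |(φ₁ x - φ₂ x) - (φ₁ y - φ₂ y)| := by
          rw [e]; exact my_abs_sub
      _ ≤ C₁ * ‖x - y‖ ^ τ + δ * ‖x - y‖ ^ τ := add_le_add (hC₁ x hx y hy) (hfsemi x hx y hy)
      _ ≤ K * ‖x - y‖ ^ τ := by
          have h7 : δ * ‖x - y‖ ^ τ ≤ 1 * ‖x - y‖ ^ τ := mul_le_mul_of_nonneg_right hδ1 hrτ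
          have h8 : K * ‖x - y‖ ^ τ = C₁ * ‖x - y‖ ^ τ + 1 * ‖x - y‖ ^ τ := by
            rw [hKdef]; ring
          linarith
  -- sup bound on g
  have hsupg : ∀ x ∈ s, |ρ x (φ₁ x) - ρ x (φ₂ x)| ≤ ctil * δ ^ τ := by
    intro x hx
    have h := hhold x hx x hx (φ₁ x) (φ₂ x)
    have e : Real.sqrt (‖x - x‖ ^ 2 + (φ₁ x - φ₂ x) ^ 2) = |φ₁ x - φ₂ x| := by
      rw [sub_self, norm_zero]
      simp [Real.sqrt_sq_eq_abs]
    rw [e] at h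
    calc |ρ x (φ₁ x) - ρ x (φ₂ x)| ≤ ctil * |φ₁ x - φ₂ x| ^ τ := h
      _ ≤ ctil * δ ^ τ := mul_le_mul_of_nonneg_left
          (Real.rpow_le_rpow (abs_nonneg _) (hfsup x hx) hτ0.le) hctil
  -- pair bound for a single composition
  have hpairρ : ∀ (φ : EuclideanSpace ℝ (Fin n) → ℝ) (C : ℝ), 0 ≤ C → C ≤ K →
      (∀ x ∈ s, ∀ y ∈ s, |φ x - φ y| ≤ C * ‖x - y‖ ^ τ) →
      ∀ x ∈ s, ∀ y ∈ s, |ρ x (φ x) - ρ y (φ y)| ≤ ctil * E ^ τ * ‖x - y‖ ^ (τ * τ) := by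
    intro φ C hC hCK hφH x hx y hy
    rcases eq_or_ne x y with rfl | hxy
    · simp [sub_self, Real.zero_rpow (mul_pos hτ0 hτ0).ne',
        mul_nonneg (mul_nonneg hctil (Real.rpow_nonneg hE0 _))]
    · have hr : 0 < ‖x - y‖ := by rwa [norm_sub_pos_iff]
      have hrτ : 0 < ‖x - y‖ ^ τ := Real.rpow_pos_of_pos hr _
      have h := hhold x hx y hy (φ x) (φ y)
      have h1 : Real.sqrt (‖x - y‖ ^ 2 + (φ x - φ y) ^ 2) ≤ ‖x - y‖ + |φ x - φ y| := by
        rw [show ‖x - y‖ + |φ x - φ y| =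
            Real.sqrt ((‖x - y‖ + |φ x - φ y|) ^ 2) from
          (Real.sqrt_sq (by positivity)).symm]
        apply Real.sqrt_le_sqrt
        nlinarith [abs_nonneg (φ x - φ y), sq_abs (φ x - φ y), hr.le]
      have hφb : |φ x - φ y| ≤ K * ‖x - y‖ ^ τ :=
        le_trans (hφH x hx y hy) (mul_le_mul_of_nonneg_right hCK hrτ.le)
      have hrD : ‖x - y‖ ≤ D * ‖x - y‖ ^ τ := by
        have e1 : ‖x - y‖ = ‖x - y‖ ^ τ * ‖x - y‖ ^ (1 - τ) := by
          rw [← Real.rpow_add hr]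
          norm_num
        have e2 : ‖x - y‖ ^ (1 - τ) ≤ D ^ (1 - τ) :=
          Real.rpow_le_rpow hr.le (hDdist x hx y hy) (by linarith)
        have e3 : D ^ (1 - τ) ≤ D := by
          calc D ^ (1 - τ) ≤ D ^ (1:ℝ) :=
                Real.rpow_le_rpow_of_exponent_le hD1 (by linarith)
            _ = D := Real.rpow_one D
        calc ‖x - y‖ = ‖x - y‖ ^ τ * ‖x - y‖ ^ (1 - τ) := e1
          _ ≤ ‖x - y‖ ^ τ * D := mul_le_mul_of_nonneg_left (e2.trans e3) hrτ.le
          _ = D * ‖x - y‖ ^ τ := mul_comm _ _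
      have h2 : ‖x - y‖ + |φ x - φ y| ≤ E * ‖x - y‖ ^ τ := by
        calc ‖x - y‖ + |φ x - φ y| ≤ D * ‖x - y‖ ^ τ + K * ‖x - y‖ ^ τ := add_le_add hrD hφb
          _ = E * ‖x - y‖ ^ τ := by rw [hEdef]; ring
      have h3 : Real.sqrt (‖x - y‖ ^ 2 + (φ x - φ y) ^ 2) ^ τ ≤ E ^ τ * ‖x - y‖ ^ (τ * τ) := by
        calc Real.sqrt (‖x - y‖ ^ 2 + (φ x - φ y) ^ 2) ^ τ ≤ (E * ‖x - y‖ ^ τ) ^ τ :=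
              Real.rpow_le_rpow (Real.sqrt_nonneg _) (h1.trans h2) hτ0.le
          _ = E ^ τ * (‖x - y‖ ^ τ) ^ τ := Real.mul_rpow hE0 hrτ.le
          _ = E ^ τ * ‖x - y‖ ^ (τ * τ) := by rw [← Real.rpow_mul hr.le]
      calc |ρ x (φ x) - ρ y (φ y)| ≤ ctil * Real.sqrt (‖x - y‖ ^ 2 + (φ x - φ y) ^ 2) ^ τ := h
        _ ≤ ctil * (E ^ τ * ‖x - y‖ ^ (τ * τ)) := mul_le_mul_of_nonneg_left h3 hctil
        _ = ctil * E ^ τ * ‖x - y‖ ^ (τ * τ) := by ring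
  -- pair bound on g
  have hC₁K : C₁ ≤ K := by rw [hKdef]; linarith
  have hgpair : ∀ x ∈ s, ∀ y ∈ s,
      |(ρ x (φ₁ x) - ρ x (φ₂ x)) - (ρ y (φ₁ y) - ρ y (φ₂ y))| ≤ A * ‖x - y‖ ^ (τ * τ) := by
    intro x hx y hy
    have e : (ρ x (φ₁ x) - ρ x (φ₂ x)) - (ρ y (φ₁ y) - ρ y (φ₂ y)) =
        (ρ x (φ₁ x) - ρ y (φ₁ y)) - (ρ x (φ₂ x) - ρ y (φ₂ y)) := by ring
    have b1 := hpairρ φ₁ C₁ hC₁0 hC₁K hC₁ x hx y hy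
    have b2 := hpairρ φ₂ K hK0 le_rfl hC₂ x hx y hy
    calc |(ρ x (φ₁ x) - ρ x (φ₂ x)) - (ρ y (φ₁ y) - ρ y (φ₂ y))|
        = |(ρ x (φ₁ x) - ρ y (φ₁ y)) - (ρ x (φ₂ x) - ρ y (φ₂ y))| := by rw [e]
      _ ≤ |ρ x (φ₁ x) - ρ y (φ₁ y)| + |ρ x (φ₂ x) - ρ y (φ₂ y)| := my_abs_sub
      _ ≤ A * ‖x - y‖ ^ (τ * τ) := by rw [hAdef]; linarith
  -- assemble
  have hmε2 : m ≤ ε / 2 := min_le_left _ _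
  have hsup_le : supNorm (fun x => ρ x (φ₁ x) - ρ x (φ₂ x)) s ≤ ε / 2 := by
    apply Real.sSup_le _ (by linarith)
    rintro _ ⟨x, hx, rfl⟩
    simp only []
    linarith [hsupg x hx, hδτ]
  have hsemi_le : holderSemi α (fun x => ρ x (φ₁ x) - ρ x (φ₂ x)) s ≤ ε / 2 := by
    apply Real.sSup_le _ (by linarith)
    rintro c ⟨x, hx, y, hy, hxy, rfl⟩
    have hr : 0 < ‖x - y‖ := by rwa [norm_sub_pos_iff]
    have hrα : 0 < ‖x - y‖ ^ α := Real.rpow_pos_of_pos hr _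
    rw [div_le_iff₀ hrα]
    rcases le_or_gt ‖x - y‖ r₀ with hcase | hcase
    · have e : ‖x - y‖ ^ (τ * τ) = ‖x - y‖ ^ p * ‖x - y‖ ^ α := by
        rw [← Real.rpow_add hr]
        congr 1
        rw [hpdef]; ring
      have h1 : ‖x - y‖ ^ p ≤ r₀ ^ p := Real.rpow_le_rpow hr.le hcase hp.le
      calc |(fun x => ρ x (φ₁ x) - ρ x (φ₂ x)) x - (fun x => ρ x (φ₁ x) - ρ x (φ₂ x)) y|
          ≤ A * ‖x - y‖ ^ (τ * τ) := hgpair x hx y hy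
        _ = A * ‖x - y‖ ^ p * ‖x - y‖ ^ α := by rw [e]; ring
        _ ≤ A * r₀ ^ p * ‖x - y‖ ^ α :=
            mul_le_mul_of_nonneg_right (mul_le_mul_of_nonneg_left h1 hA0) hrα.le
        _ ≤ ε / 2 * ‖x - y‖ ^ α := by nlinarith
    · have h1 : |(ρ x (φ₁ x) - ρ x (φ₂ x)) - (ρ y (φ₁ y) - ρ y (φ₂ y))| ≤ 2 * (ctil * δ ^ τ) := by
        have := my_abs_sub (a := ρ x (φ₁ x) - ρ x (φ₂ x)) (b := ρ y (φ₁ y) - ρ y (φ₂ y))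
        linarith [hsupg x hx, hsupg y hy]
      have h2 : ctil * δ ^ τ ≤ ε / 4 * r₀ ^ α := hδτ.trans (min_le_right _ _)
      have h3 : r₀ ^ α ≤ ‖x - y‖ ^ α := Real.rpow_le_rpow hr₀pos.le hcase.le hα.le
      simp only []
      nlinarith
  rw [holderNorm]
  linarith
end
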